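/- Under hypotheses (C1)–(C6), the operator T defined by Tu(t) := η1 γ1(t) h1[u] + η2 γ2(t) h2[u] + λ ∫₀¹ k(t,s) f(s, u(s), u'(s)) ds is a compact (completely continuous) map from P into P: T is continuous on P with respect to the C¹ norm, and T maps every bounded subset of P into a relatively compact subset of C¹[0,1]. -/

import Mathlib

open MeasureTheory Set Bornology

noncomputable section

/-- The interval `[0,1]`. -/
abbrev I01 : Set ℝ := Set.Icc 0 1

/-- The space `C[0,1] × C[0,1]`; an element of `C¹[0,1]` is encoded as the pair `(u, u')`.
The product norm is exactly `‖(u,u')‖ = max {‖u‖_∞, ‖u'‖_∞}`. -/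
abbrev E := C(I01, ℝ) × C(I01, ℝ)

/-- The extension to `ℝ` of a continuous function on `[0,1]` (constant outside `[0,1]`). -/
def ext01 (g : C(I01, ℝ)) : ℝ → ℝ := Set.IccExtend zero_le_one ⇑g

/-- `p = (u, u')` encodes a `C¹` function: `u'` is the derivative of `u` on `[0,1]`. -/
def IsC1 (p : E) : Prop :=
  ∀ t : I01, HasDerivWithinAt (ext01 p.1) (p.2 t) I01 (t : ℝ)

/-- The cone `P` of non-negative `C¹[0,1]` functions with non-negative derivative. -/
def coneP : Set E :=
  {p | IsC1 p ∧ ∀ t : I01, 0 ≤ p.1 t ∧ 0 ≤ p.2 t}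

open Filter Topology

/-- Arzelà–Ascoli for `C([0,1], ℝ)`: a uniformly bounded, equicontinuous family has
compact closure. -/
lemma aa_compact_closure (A : Set C(I01, ℝ)) (M : ℝ)
    (hM : ∀ g ∈ A, ∀ t : I01, |g t| ≤ M)
    (heq : Equicontinuous (fun g : A => (g : I01 → ℝ))) :
    IsCompact (closure A) := by
  let e := ContinuousMap.isometryEquivBoundedOfCompact I01 ℝ
  have h1 : IsCompact (closure (e '' A)) := by
    apply BoundedContinuousFunction.arzela_ascoli (Set.Icc (-M) M) isCompact_Icc
    · rintro f x ⟨g, hg, rfl⟩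
      have h := abs_le.1 (hM g hg x)
      exact ⟨h.1, h.2⟩
    · have h2 := heq.comp (fun b : e '' A =>
        (⟨e.symm b, by
          obtain ⟨g, hg, hgb⟩ := b.2
          have : e.symm b = g := by rw [← hgb]; exact e.symm_apply_apply g
          rw [this]; exact hg⟩ : A))
      convert h2 using 1
      funext b; funext x; rfl
  have h3 : closure A = e.symm.toHomeomorph '' closure (e '' A) := by
    rw [Homeomorph.image_closure e.symm.toHomeomorph]
    exact congrArg closure (Equiv.symm_image_image e.toEquiv A).symm
  rw [h3]
  exact h1.image e.symm.toHomeomorph.continuous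

/-- The reference measure: Lebesgue measure restricted to `(0,1]`. -/
def μ01 : Measure ℝ := volume.restrict (Ioc (0:ℝ) 1)

lemma mem_I01_ae : ∀ᵐ s ∂μ01, s ∈ I01 :=
  (ae_restrict_mem measurableSet_Ioc).mono fun _ hs => Ioc_subset_Icc_self hs

lemma ae_I01_to_μ01 {P : ℝ → Prop} (h : ∀ᵐ s ∂(volume.restrict I01), P s) :
    ∀ᵐ s ∂μ01, P s :=
  ae_mono (Measure.restrict_mono Ioc_subset_Icc_self le_rfl) h

/-- Continuity (in the parameter) of a dominated kernel integral. -/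
lemma ker_contOn (κ : ℝ → ℝ → ℝ) (Φκ G : ℝ → ℝ) (M : ℝ)
    (hmeas : ∀ t ∈ I01, AEStronglyMeasurable (fun s => κ t s * G s) μ01)
    (hcont : ∀ᵐ s ∂μ01, ContinuousOn (fun t => κ t s) I01)
    (hbd : ∀ᵐ s ∂μ01, ∀ t ∈ I01, |κ t s| ≤ Φκ s)
    (hGbd : ∀ᵐ s ∂μ01, |G s| ≤ M)
    (hΦκ : Integrable Φκ μ01) :
    ContinuousOn (fun t => ∫ s, κ t s * G s ∂μ01) I01 := by
  apply continuousOn_of_dominated hmeas (bound := fun s => Φκ s * M) ?_ (hΦκ.mul_const M) ?_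
  · intro t ht
    filter_upwards [hbd, hGbd] with s h1 h2
    rw [Real.norm_eq_abs, abs_mul]
    exact mul_le_mul (h1 t ht) h2 (abs_nonneg _) ((abs_nonneg _).trans (h1 t ht))
  · filter_upwards [hcont] with s hs
    exact hs.mul continuousOn_const

/-- The equicontinuity modulus for a dominated kernel. -/
lemma ker_tendsto_abs (κ : ℝ → ℝ → ℝ) (Φκ : ℝ → ℝ) (t₀ : ℝ) (ht₀ : t₀ ∈ I01)
    (hmeas : ∀ t ∈ I01, AEStronglyMeasurable (fun s => κ t s) μ01)
    (hcont : ∀ᵐ s ∂μ01, ContinuousOn (fun t => κ t s) I01)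
    (hbd : ∀ᵐ s ∂μ01, ∀ t ∈ I01, |κ t s| ≤ Φκ s)
    (hΦκ : Integrable Φκ μ01) :
    Tendsto (fun t => ∫ s, |κ t s - κ t₀ s| ∂μ01) (𝓝[I01] t₀) (𝓝 0) := by
  have hco : ContinuousOn (fun t => ∫ s, |κ t s - κ t₀ s| ∂μ01) I01 := by
    apply continuousOn_of_dominated (bound := fun s => Φκ s + Φκ s) ?_ ?_ (hΦκ.add hΦκ) ?_
    · intro t ht
      have := ((hmeas t ht).sub (hmeas t₀ ht₀)).norm
      simpa [Real.norm_eq_abs] using this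
    · intro t ht
      filter_upwards [hbd] with s hs
      rw [Real.norm_eq_abs, abs_abs]
      exact (abs_sub _ _).trans (add_le_add (hs t ht) (hs t₀ ht₀))
    · filter_upwards [hcont] with s hs
      exact (hs.sub continuousOn_const).abs
  have h0 : (∫ s, |κ t₀ s - κ t₀ s| ∂μ01) = 0 := by simp
  have := (hco t₀ ht₀)
  rw [ContinuousWithinAt, h0] at this
  exact this

/-- Integrability of a dominated kernel integrand. -/
lemma ker_integrable (κ : ℝ → ℝ → ℝ) (Φκ G : ℝ → ℝ) (M : ℝ) (t : ℝ) (ht : t ∈ I01)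
    (hmeas : AEStronglyMeasurable (fun s => κ t s * G s) μ01)
    (hbd : ∀ᵐ s ∂μ01, ∀ t ∈ I01, |κ t s| ≤ Φκ s)
    (hGbd : ∀ᵐ s ∂μ01, |G s| ≤ M)
    (hΦκ : Integrable Φκ μ01) :
    Integrable (fun s => κ t s * G s) μ01 := by
  apply (hΦκ.mul_const M).mono' hmeas
  filter_upwards [hbd, hGbd] with s h1 h2
  rw [Real.norm_eq_abs, abs_mul]
  exact mul_le_mul (h1 t ht) h2 (abs_nonneg _) ((abs_nonneg _).trans (h1 t ht))

/-- Bound for a dominated kernel integral. -/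
lemma ker_bound (κ : ℝ → ℝ → ℝ) (Φκ G : ℝ → ℝ) (M : ℝ) (hm : 0 ≤ M) (t : ℝ) (ht : t ∈ I01)
    (hbd : ∀ᵐ s ∂μ01, ∀ t ∈ I01, |κ t s| ≤ Φκ s)
    (hGbd : ∀ᵐ s ∂μ01, |G s| ≤ M)
    (hΦκ : Integrable Φκ μ01) :
    |∫ s, κ t s * G s ∂μ01| ≤ (∫ s, Φκ s ∂μ01) * M := by
  rw [← Real.norm_eq_abs, ← integral_mul_const]
  apply norm_integral_le_of_norm_le (hΦκ.mul_const M)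
  filter_upwards [hbd, hGbd] with s h1 h2
  rw [Real.norm_eq_abs, abs_mul]
  exact mul_le_mul (h1 t ht) h2 (abs_nonneg _) ((abs_nonneg _).trans (h1 t ht))

set_option maxHeartbeats 2000000 in
/-- Difference bound for a dominated kernel integral. -/
lemma ker_diff_bound (κ : ℝ → ℝ → ℝ) (Φκ G : ℝ → ℝ) (M : ℝ) (t t₀ : ℝ)
    (ht : t ∈ I01) (ht₀ : t₀ ∈ I01)
    (hmt : AEStronglyMeasurable (fun s => κ t s) μ01)
    (hmt₀ : AEStronglyMeasurable (fun s => κ t₀ s) μ01)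
    (hG : AEStronglyMeasurable G μ01)
    (hbd : ∀ᵐ s ∂μ01, ∀ t ∈ I01, |κ t s| ≤ Φκ s)
    (hGbd : ∀ᵐ s ∂μ01, |G s| ≤ M)
    (hΦκ : Integrable Φκ μ01) :
    |(∫ s, κ t s * G s ∂μ01) - ∫ s, κ t₀ s * G s ∂μ01|
      ≤ (∫ s, |κ t s - κ t₀ s| ∂μ01) * M := by
  have hint : Integrable (fun s => |κ t s - κ t₀ s|) μ01 := by
    apply (hΦκ.add hΦκ).mono' (by simpa [Real.norm_eq_abs] using (hmt.sub hmt₀).norm)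
    filter_upwards [hbd] with s hs
    rw [Real.norm_eq_abs, abs_abs]
    exact (abs_sub _ _).trans (add_le_add (hs t ht) (hs t₀ ht₀))
  rw [← integral_sub (ker_integrable κ Φκ G M t ht (hmt.mul hG) hbd hGbd hΦκ)
    (ker_integrable κ Φκ G M t₀ ht₀ (hmt₀.mul hG) hbd hGbd hΦκ),
    ← Real.norm_eq_abs, ← integral_mul_const]
  apply norm_integral_le_of_norm_le (hint.mul_const M)
  filter_upwards [hGbd] with s h2
  have h3 : κ t s * G s - κ t₀ s * G s = (κ t s - κ t₀ s) * G s := by ring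
  rw [h3, Real.norm_eq_abs, abs_mul]
  exact mul_le_mul le_rfl h2 (abs_nonneg _) (abs_nonneg _)

set_option maxHeartbeats 2000000 in
/-- Under (C₁)–(C₆), the operator `T` is a compact (completely continuous) map from `P` into
`P`: it is continuous on `P` for the `C¹` norm and maps bounded subsets of `P` into relatively
compact subsets of `C¹[0,1]`. -/
theorem T_is_compact
    (k kt : ℝ → ℝ → ℝ) (Φ Ψ : ℝ → ℝ) (f : ℝ → ℝ → ℝ → ℝ)
    (γ₁ γ₂ γ₁' γ₂' : ℝ → ℝ) (η₁ η₂ lam : ℝ) (h₁ h₂ : E → ℝ)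
    -- (C₁)
    (hk_meas : Measurable (Function.uncurry k))
    (hk_cont : ∀ᵐ s ∂(volume.restrict I01), ContinuousOn (fun t => k t s) I01)
    (hk_nonneg : ∀ t ∈ I01, ∀ s ∈ I01, 0 ≤ k t s)
    (hΦ : IntegrableOn Φ I01)
    (hkΦ : ∀ᵐ s ∂(volume.restrict I01), ∀ t ∈ I01, k t s ≤ Φ s)
    -- (C₂)
    (hkt : ∀ᵐ s ∂(volume.restrict I01),
      (∀ t ∈ I01, HasDerivWithinAt (fun x => k x s) (kt t s) I01 t) ∧
      ContinuousOn (fun t => kt t s) I01 ∧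
      ∀ t ∈ I01, 0 ≤ kt t s ∧ kt t s ≤ Ψ s)
    (hΨ : IntegrableOn Ψ I01)
    -- (C₃)
    (hf_cont : ContinuousOn (fun x : ℝ × ℝ × ℝ => f x.1 x.2.1 x.2.2)
      (I01 ×ˢ Ici (0:ℝ) ×ˢ Ici (0:ℝ)))
    (hf_nonneg : ∀ t ∈ I01, ∀ u ∈ Ici (0:ℝ), ∀ v ∈ Ici (0:ℝ), 0 ≤ f t u v)
    -- (C₄)
    (hγ₁ : ∀ t ∈ I01, HasDerivWithinAt γ₁ (γ₁' t) I01 t)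
    (hγ₂ : ∀ t ∈ I01, HasDerivWithinAt γ₂ (γ₂' t) I01 t)
    (hγ₁'c : ContinuousOn γ₁' I01) (hγ₂'c : ContinuousOn γ₂' I01)
    (hγ_nonneg : ∀ t ∈ I01, 0 ≤ γ₁ t ∧ 0 ≤ γ₂ t ∧ 0 ≤ γ₁' t ∧ 0 ≤ γ₂' t)
    -- (C₅)
    (hη₁ : 0 ≤ η₁) (hη₂ : 0 ≤ η₂) (hlam : 0 ≤ lam)
    -- (C₆)
    (hh₁_nonneg : ∀ p ∈ coneP, 0 ≤ h₁ p) (hh₂_nonneg : ∀ p ∈ coneP, 0 ≤ h₂ p)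
    (hh₁_cont : ContinuousOn h₁ coneP) (hh₂_cont : ContinuousOn h₂ coneP)
    (hh₁_bdd : ∀ B ⊆ coneP, IsBounded B → IsBounded (h₁ '' B))
    (hh₂_bdd : ∀ B ⊆ coneP, IsBounded B → IsBounded (h₂ '' B)) :
    ∃ T : E → E,
      (∀ p ∈ coneP,
        (∀ t : I01, (T p).1 t = η₁ * γ₁ (t : ℝ) * h₁ p + η₂ * γ₂ (t : ℝ) * h₂ p +
          lam * ∫ s in (0:ℝ)..1, k (t : ℝ) s * f s (ext01 p.1 s) (ext01 p.2 s)) ∧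
        (∀ t : I01, (T p).2 t = η₁ * γ₁' (t : ℝ) * h₁ p + η₂ * γ₂' (t : ℝ) * h₂ p +
          lam * ∫ s in (0:ℝ)..1, kt (t : ℝ) s * f s (ext01 p.1 s) (ext01 p.2 s))) ∧
      MapsTo T coneP coneP ∧
      ContinuousOn T coneP ∧
      ∀ B ⊆ coneP, IsBounded B → IsCompact (closure (T '' B)) := by
  classical
  -- notation and elementary facts
  have h0I : (0:ℝ) ∈ I01 := ⟨le_rfl, zero_le_one⟩
  set F : E → ℝ → ℝ := fun p s => f s (ext01 p.1 s) (ext01 p.2 s) with hF_def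
  have hext_cont : ∀ u : C(I01, ℝ), Continuous (ext01 u) :=
    fun u => u.continuous.comp continuous_projIcc
  have hext_eq : ∀ (u : C(I01, ℝ)) (s : ℝ) (hs : s ∈ I01), ext01 u s = u ⟨s, hs⟩ :=
    fun u s hs => Set.IccExtend_of_mem zero_le_one _ hs
  have hext_nonneg : ∀ p ∈ coneP, ∀ s : ℝ, 0 ≤ ext01 p.1 s ∧ 0 ≤ ext01 p.2 s := by
    intro p hp s
    exact ⟨(hp.2 _).1, (hp.2 _).2⟩
  have hext_le : ∀ (u : C(I01, ℝ)) (s : ℝ), |ext01 u s| ≤ ‖u‖ := by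
    intro u s
    rw [← Real.norm_eq_abs]
    exact u.norm_coe_le_norm _
  -- measurability of sections of k and kt
  have hkmeas : ∀ t : ℝ, Measurable fun s => k t s :=
    fun t => hk_meas.comp (measurable_const.prodMk measurable_id)
  have hktmeas : ∀ t ∈ I01, AEStronglyMeasurable (fun s => kt t s) μ01 := by
    intro t ht
    have hI : AEMeasurable (fun s => kt t s) (volume.restrict I01) := by
      set c : ℝ := if t < 1 then 1 else 0 with hc
      have hcI : c ∈ I01 := by
        rw [hc]; split <;> exact ⟨by norm_num, by norm_num⟩
      have hct : c ≠ t := by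
        rw [hc]; split
        · rename_i h; exact fun hh => absurd hh.symm (ne_of_lt h)
        · rename_i h
          have h1 : t = 1 := le_antisymm ht.2 (not_lt.1 h)
          rw [h1]; norm_num
      set q : ℕ → ℝ := fun n => t + (1 / (n + 1 : ℝ)) • (c - t) with hq
      have hn0 : ∀ n : ℕ, (0:ℝ) < 1 / (n + 1 : ℝ) := by
        intro n; positivity
      have hqI : ∀ n, q n ∈ I01 :=
        fun n => (convex_Icc (0:ℝ) 1).add_smul_sub_mem ht hcI
          ⟨(hn0 n).le, by
            rw [div_le_one (by positivity)]
            linarith [Nat.cast_nonneg (α := ℝ) n]⟩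
      have hqne : ∀ n : ℕ, q n ≠ t := by
        intro n h
        apply hct
        have h1 : (1 / (n + 1 : ℝ)) * (c - t) = 0 := by
          have h2 := congrArg (fun x => x - t) h
          simpa [hq, smul_eq_mul] using h2
        rcases mul_eq_zero.1 h1 with h2 | h2
        · exact absurd h2 (hn0 n).ne'
        · exact sub_eq_zero.1 h2
      have hqtend : Tendsto q atTop (𝓝[I01 \ {t}] t) := by
        apply tendsto_nhdsWithin_of_tendsto_nhds_of_eventually_within
        · have h3 : Tendsto (fun n : ℕ => (1 / (n + 1 : ℝ)) * (c - t)) atTop (𝓝 0) := by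
            simpa using tendsto_one_div_add_atTop_nhds_zero_nat.mul_const (c - t)
          have h4 := (tendsto_const_nhds (x := t) (f := (atTop : Filter ℕ))).add h3
          simpa [hq, smul_eq_mul] using h4
        · exact Eventually.of_forall fun n => ⟨hqI n, hqne n⟩
      apply aemeasurable_of_tendsto_metrizable_ae atTop
        (f := fun n s => (k (q n) s - k t s) / (q n - t))
      · intro n
        exact (((hkmeas (q n)).sub (hkmeas t)).div_const _).aemeasurable
      · filter_upwards [hkt] with s hs
        have h1 := hasDerivWithinAt_iff_tendsto_slope.1 (hs.1 t ht)
        have h2 := h1.comp hqtend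
        apply h2.congr
        intro n
        simp [Function.comp, slope_def_field]
    exact (hI.mono_measure (Measure.restrict_mono Ioc_subset_Icc_self le_rfl)).aestronglyMeasurable
  -- facts about F
  have hF_contOn : ∀ p ∈ coneP, ContinuousOn (F p) I01 := by
    intro p hp
    exact hf_cont.comp
      ((continuous_id.prodMk ((hext_cont p.1).prodMk (hext_cont p.2))).continuousOn)
      (fun s hs => ⟨hs, (hext_nonneg p hp s).1, (hext_nonneg p hp s).2⟩)
  have hF_nonneg : ∀ p ∈ coneP, ∀ s ∈ I01, 0 ≤ F p s :=
    fun p hp s hs => hf_nonneg s hs _ (hext_nonneg p hp s).1 _ (hext_nonneg p hp s).2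
  have hF_meas : ∀ p ∈ coneP, AEStronglyMeasurable (F p) μ01 := fun p hp =>
    ((hF_contOn p hp).mono Ioc_subset_Icc_self).aestronglyMeasurable measurableSet_Ioc
  -- ae facts transported to μ01
  have hkt' : ∀ᵐ s ∂μ01,
      (∀ t ∈ I01, HasDerivWithinAt (fun x => k x s) (kt t s) I01 t) ∧
      ContinuousOn (fun t => kt t s) I01 ∧
      ∀ t ∈ I01, 0 ≤ kt t s ∧ kt t s ≤ Ψ s := ae_I01_to_μ01 hkt
  have hk_cont' : ∀ᵐ s ∂μ01, ContinuousOn (fun t => k t s) I01 := ae_I01_to_μ01 hk_cont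
  have hkΦ' : ∀ᵐ s ∂μ01, ∀ t ∈ I01, |k t s| ≤ Φ s := by
    filter_upwards [ae_I01_to_μ01 hkΦ, mem_I01_ae] with s h1 h2
    intro t ht
    rw [abs_of_nonneg (hk_nonneg t ht s h2)]
    exact h1 t ht
  have hktΨ' : ∀ᵐ s ∂μ01, ∀ t ∈ I01, |kt t s| ≤ Ψ s := by
    filter_upwards [hkt'] with s hs
    intro t ht
    rw [abs_of_nonneg (hs.2.2 t ht).1]
    exact (hs.2.2 t ht).2
  have hktc' : ∀ᵐ s ∂μ01, ContinuousOn (fun t => kt t s) I01 := by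
    filter_upwards [hkt'] with s hs; exact hs.2.1
  have hΦμ : Integrable Φ μ01 := hΦ.mono_set Ioc_subset_Icc_self
  have hΨμ : Integrable Ψ μ01 := hΨ.mono_set Ioc_subset_Icc_self
  have hΦ0 : 0 ≤ᵐ[μ01] Φ := by
    filter_upwards [hkΦ'] with s h1
    exact (abs_nonneg _).trans (h1 0 h0I)
  have hΨ0 : 0 ≤ᵐ[μ01] Ψ := by
    filter_upwards [hktΨ'] with s h1
    exact (abs_nonneg _).trans (h1 0 h0I)
  -- per-element bound for F
  have hFbd : ∀ p ∈ coneP, ∃ M, 0 ≤ M ∧ ∀ᵐ s ∂μ01, |F p s| ≤ M := by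
    intro p hp
    obtain ⟨M, hM⟩ := isCompact_Icc.exists_bound_of_continuousOn (hF_contOn p hp)
    refine ⟨max M 0, le_max_right _ _, ?_⟩
    filter_upwards [mem_I01_ae] with s hs
    exact le_trans (by simpa [Real.norm_eq_abs] using hM s hs) (le_max_left _ _)
  -- measurability, integrability, continuity of the two kernel integrals
  have hkF_meas : ∀ p ∈ coneP, ∀ t : ℝ, AEStronglyMeasurable (fun s => k t s * F p s) μ01 :=
    fun p hp t => ((hkmeas t).aestronglyMeasurable).mul (hF_meas p hp)
  have hktF_meas : ∀ p ∈ coneP, ∀ t ∈ I01, AEStronglyMeasurable (fun s => kt t s * F p s) μ01 :=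
    fun p hp t ht => (hktmeas t ht).mul (hF_meas p hp)
  have hkF_int : ∀ p ∈ coneP, ∀ t ∈ I01, Integrable (fun s => k t s * F p s) μ01 := by
    intro p hp t ht
    obtain ⟨M, hM0, hM⟩ := hFbd p hp
    exact ker_integrable k Φ (F p) M t ht (hkF_meas p hp t) hkΦ' hM hΦμ
  have hktF_int : ∀ p ∈ coneP, ∀ t ∈ I01, Integrable (fun s => kt t s * F p s) μ01 := by
    intro p hp t ht
    obtain ⟨M, hM0, hM⟩ := hFbd p hp
    exact ker_integrable kt Ψ (F p) M t ht (hktF_meas p hp t ht) hktΨ' hM hΨμ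
  have hK_contOn : ∀ p ∈ coneP, ContinuousOn (fun t => ∫ s, k t s * F p s ∂μ01) I01 := by
    intro p hp
    obtain ⟨M, hM0, hM⟩ := hFbd p hp
    exact ker_contOn k Φ (F p) M (fun t _ => hkF_meas p hp t) hk_cont' hkΦ' hM hΦμ
  have hQ_contOn : ∀ p ∈ coneP, ContinuousOn (fun t => ∫ s, kt t s * F p s ∂μ01) I01 := by
    intro p hp
    obtain ⟨M, hM0, hM⟩ := hFbd p hp
    exact ker_contOn kt Ψ (F p) M (fun t ht => hktF_meas p hp t ht) hktc' hktΨ' hM hΨμ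
  -- differentiation under the integral sign (via slopes and dominated convergence)
  have hK_deriv : ∀ p ∈ coneP, ∀ t₀ ∈ I01,
      HasDerivWithinAt (fun t => ∫ s, k t s * F p s ∂μ01)
        (∫ s, kt t₀ s * F p s ∂μ01) I01 t₀ := by
    intro p hp t₀ ht₀
    obtain ⟨M, hM0, hM⟩ := hFbd p hp
    rw [hasDerivWithinAt_iff_tendsto_slope]
    have hmem_ev : ∀ᶠ t in 𝓝[I01 \ {t₀}] t₀, t ∈ I01 \ {t₀} := eventually_mem_nhdsWithin
    have key : Tendsto (fun t => ∫ s, slope (fun x => k x s) t₀ t * F p s ∂μ01)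
        (𝓝[I01 \ {t₀}] t₀) (𝓝 (∫ s, kt t₀ s * F p s ∂μ01)) := by
      apply tendsto_integral_filter_of_dominated_convergence (bound := fun s => Ψ s * M)
      · filter_upwards [hmem_ev] with t ht
        have he : (fun s => slope (fun x => k x s) t₀ t * F p s)
            = fun s => ((k t s - k t₀ s) / (t - t₀)) * F p s := by
          funext s; rw [slope_def_field]
        rw [he]
        exact ((((hkmeas t).sub (hkmeas t₀)).div_const _).aestronglyMeasurable).mul
          (hF_meas p hp)
      · filter_upwards [hmem_ev] with t ht
        filter_upwards [hkt', hM, mem_I01_ae] with s hs hMs hsI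
        have hΨs0 : 0 ≤ Ψ s := le_trans (hs.2.2 t₀ ht₀).1 (hs.2.2 t₀ ht₀).2
        have hsl : |slope (fun x => k x s) t₀ t| ≤ Ψ s := by
          rcases eq_or_ne t t₀ with h | h
          · rw [h, slope_same]; simpa using hΨs0
          · have hmvt := Convex.norm_image_sub_le_of_norm_hasDerivWithin_le
              (f := fun x => k x s) (f' := fun x => kt x s) (C := Ψ s)
              (fun x hx => hs.1 x hx)
              (fun x hx => by
                rw [Real.norm_eq_abs, abs_of_nonneg (hs.2.2 x hx).1]
                exact (hs.2.2 x hx).2)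
              (convex_Icc 0 1) ht₀ ht.1
            rw [slope_def_field, abs_div]
            rw [div_le_iff₀ (by
              rw [abs_pos]; exact sub_ne_zero.2 (by simpa using ht.2))]
            calc |k t s - k t₀ s| ≤ Ψ s * |t - t₀| := by
                  simpa [Real.norm_eq_abs] using hmvt
              _ = Ψ s * |t - t₀| := rfl
        rw [Real.norm_eq_abs, abs_mul]
        exact mul_le_mul hsl hMs (abs_nonneg _) hΨs0
      · exact hΨμ.mul_const M
      · filter_upwards [hkt'] with s hs
        exact (hasDerivWithinAt_iff_tendsto_slope.1 (hs.1 t₀ ht₀)).mul_const (F p s)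
    apply key.congr'
    filter_upwards [hmem_ev] with t ht
    have htI := ht.1
    have htne : t - t₀ ≠ 0 := sub_ne_zero.2 (by simpa using ht.2)
    have he : (fun s => slope (fun x => k x s) t₀ t * F p s)
        = fun s => (t - t₀)⁻¹ * (k t s * F p s - k t₀ s * F p s) := by
      funext s; rw [slope_def_field]; field_simp
    rw [he, integral_const_mul, integral_sub (hkF_int p hp t htI) (hkF_int p hp t₀ ht₀),
      slope_def_field]
    field_simp
  -- continuity of the γ's
  have hγ₁c : ContinuousOn γ₁ I01 := fun t ht => (hγ₁ t ht).continuousWithinAt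
  have hγ₂c : ContinuousOn γ₂ I01 := fun t ht => (hγ₂ t ht).continuousWithinAt
  have hG1_contOn : ∀ p ∈ coneP, ContinuousOn
      (fun t => η₁ * γ₁ t * h₁ p + η₂ * γ₂ t * h₂ p + lam * ∫ s, k t s * F p s ∂μ01) I01 := by
    intro p hp
    exact (((continuousOn_const.mul hγ₁c).mul continuousOn_const).add
      ((continuousOn_const.mul hγ₂c).mul continuousOn_const)).add
      (continuousOn_const.mul (hK_contOn p hp))
  have hG2_contOn : ∀ p ∈ coneP, ContinuousOn
      (fun t => η₁ * γ₁' t * h₁ p + η₂ * γ₂' t * h₂ p + lam * ∫ s, kt t s * F p s ∂μ01) I01 := by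
    intro p hp
    exact (((continuousOn_const.mul hγ₁'c).mul continuousOn_const).add
      ((continuousOn_const.mul hγ₂'c).mul continuousOn_const)).add
      (continuousOn_const.mul (hQ_contOn p hp))
  -- a common bound for the γ's on [0,1]
  obtain ⟨Gγ, hGγ0, hGγ⟩ : ∃ G : ℝ, 0 ≤ G ∧ ∀ t ∈ I01,
      |γ₁ t| ≤ G ∧ |γ₂ t| ≤ G ∧ |γ₁' t| ≤ G ∧ |γ₂' t| ≤ G := by
    obtain ⟨C1, h1⟩ := isCompact_Icc.exists_bound_of_continuousOn hγ₁c
    obtain ⟨C2, h2⟩ := isCompact_Icc.exists_bound_of_continuousOn hγ₂c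
    obtain ⟨C3, h3⟩ := isCompact_Icc.exists_bound_of_continuousOn hγ₁'c
    obtain ⟨C4, h4⟩ := isCompact_Icc.exists_bound_of_continuousOn hγ₂'c
    refine ⟨max 0 (max (max C1 C2) (max C3 C4)), le_max_left _ _, fun t ht => ?_⟩
    have e1 := h1 t ht; have e2 := h2 t ht; have e3 := h3 t ht; have e4 := h4 t ht
    rw [Real.norm_eq_abs] at e1 e2 e3 e4
    refine ⟨?_, ?_, ?_, ?_⟩ <;>
      [exact e1.trans (by simp [le_max_iff, le_refl]);
       exact e2.trans (by simp [le_max_iff, le_refl]);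
       exact e3.trans (by simp [le_max_iff, le_refl]);
       exact e4.trans (by simp [le_max_iff, le_refl])]
  -- coordinates of cone elements stay in a box
  have hmembox : ∀ (Rq : ℝ), ∀ q : E, q ∈ coneP → ‖q‖ ≤ Rq →
      ∀ s ∈ I01, (s, ext01 q.1 s, ext01 q.2 s) ∈ I01 ×ˢ Icc (0:ℝ) Rq ×ˢ Icc (0:ℝ) Rq := by
    intro Rq q hq hqR s hs
    refine ⟨hs, ⟨(hext_nonneg q hq s).1, ?_⟩, ⟨(hext_nonneg q hq s).2, ?_⟩⟩
    · exact (le_abs_self _).trans ((hext_le q.1 s).trans ((norm_fst_le q).trans hqR))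
    · exact (le_abs_self _).trans ((hext_le q.2 s).trans ((norm_snd_le q).trans hqR))
  -- the integrals of the dominating functions
  set CΦ : ℝ := ∫ s, Φ s ∂μ01 with hCΦdef
  set CΨ : ℝ := ∫ s, Ψ s ∂μ01 with hCΨdef
  have hCΦ0 : 0 ≤ CΦ := integral_nonneg_of_ae hΦ0
  have hCΨ0 : 0 ≤ CΨ := integral_nonneg_of_ae hΨ0
  refine ⟨fun p => if hp : p ∈ coneP then
      (⟨I01.domRestrict (fun t => η₁ * γ₁ t * h₁ p + η₂ * γ₂ t * h₂ p +
          lam * ∫ s, k t s * F p s ∂μ01), (hG1_contOn p hp).restrict⟩,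
       ⟨I01.domRestrict (fun t => η₁ * γ₁' t * h₁ p + η₂ * γ₂' t * h₂ p +
          lam * ∫ s, kt t s * F p s ∂μ01), (hG2_contOn p hp).restrict⟩)
    else 0, ?_, ?_, ?_, ?_⟩
  -- (1) the formulas
  · intro p hp
    constructor <;> intro t <;>
      simp only [dif_pos hp, ContinuousMap.coe_mk, Set.restrict_apply] <;>
      congr 1 <;> rw [intervalIntegral.integral_of_le zero_le_one] <;> rfl
  -- (2) MapsTo
  · intro p hp
    refine ⟨?_, ?_⟩
    · intro t
      simp only [dif_pos hp, ContinuousMap.coe_mk, Set.restrict_apply]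
      have hA : HasDerivWithinAt
          (fun x => η₁ * γ₁ x * h₁ p + η₂ * γ₂ x * h₂ p + lam * ∫ s, k x s * F p s ∂μ01)
          (η₁ * γ₁' ↑t * h₁ p + η₂ * γ₂' ↑t * h₂ p + lam * ∫ s, kt ↑t s * F p s ∂μ01)
          I01 ↑t :=
        (((HasDerivWithinAt.const_mul η₁ (hγ₁ ↑t t.2)).mul_const (h₁ p)).add
          ((HasDerivWithinAt.const_mul η₂ (hγ₂ ↑t t.2)).mul_const (h₂ p))).add
          (HasDerivWithinAt.const_mul lam (hK_deriv p hp ↑t t.2))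
      apply hA.congr
      · intro y hy
        exact (hext_eq _ y hy).trans rfl
      · exact (hext_eq _ ↑t t.2).trans rfl
    · intro t
      simp only [dif_pos hp, ContinuousMap.coe_mk, Set.restrict_apply]
      have hg := hγ_nonneg ↑t t.2
      constructor
      · have h1 : 0 ≤ ∫ s, k ↑t s * F p s ∂μ01 := integral_nonneg_of_ae (by
          filter_upwards [mem_I01_ae] with s hs
          exact mul_nonneg (hk_nonneg ↑t t.2 s hs) (hF_nonneg p hp s hs))
        exact add_nonneg (add_nonneg
          (mul_nonneg (mul_nonneg hη₁ hg.1) (hh₁_nonneg p hp))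
          (mul_nonneg (mul_nonneg hη₂ hg.2.1) (hh₂_nonneg p hp)))
          (mul_nonneg hlam h1)
      · have h1 : 0 ≤ ∫ s, kt ↑t s * F p s ∂μ01 := integral_nonneg_of_ae (by
          filter_upwards [mem_I01_ae, hkt'] with s hs hs'
          exact mul_nonneg (hs'.2.2 ↑t t.2).1 (hF_nonneg p hp s hs))
        exact add_nonneg (add_nonneg
          (mul_nonneg (mul_nonneg hη₁ hg.2.2.1) (hh₁_nonneg p hp))
          (mul_nonneg (mul_nonneg hη₂ hg.2.2.2) (hh₂_nonneg p hp)))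
          (mul_nonneg hlam h1)
  -- (3) continuity on the cone
  · intro p₀ hp₀
    rw [Metric.continuousWithinAt_iff]
    intro ε hε
    set R : ℝ := ‖p₀‖ + 1 with hRdef
    have hR0 : 0 ≤ R := by positivity
    -- uniform continuity of f on a compact box
    have hKcmp : IsCompact (I01 ×ˢ Icc (0:ℝ) R ×ˢ Icc (0:ℝ) R) :=
      isCompact_Icc.prod (isCompact_Icc.prod isCompact_Icc)
    have hsub : (I01 ×ˢ Icc (0:ℝ) R ×ˢ Icc (0:ℝ) R) ⊆ I01 ×ˢ Ici (0:ℝ) ×ˢ Ici (0:ℝ) :=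
      fun x hx => ⟨hx.1, hx.2.1.1, hx.2.2.1⟩
    have hUC := hKcmp.uniformContinuousOn_of_continuous (hf_cont.mono hsub)
    rw [Metric.uniformContinuousOn_iff] at hUC
    have hden1 : (0:ℝ) < η₁ * Gγ + η₂ * Gγ + 1 := by
      nlinarith [mul_nonneg hη₁ hGγ0, mul_nonneg hη₂ hGγ0]
    have hden2 : (0:ℝ) < lam * (CΦ + CΨ) + 1 := by
      nlinarith [mul_nonneg hlam (add_nonneg hCΦ0 hCΨ0)]
    set ε₁ : ℝ := ε / (2 * (η₁ * Gγ + η₂ * Gγ + 1)) with hε₁def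
    set ε' : ℝ := ε / (4 * (lam * (CΦ + CΨ) + 1)) with hε'def
    have hε₁0 : 0 < ε₁ := by rw [hε₁def]; positivity
    have hε'0 : 0 < ε' := by rw [hε'def]; positivity
    obtain ⟨δf, hδf0, hδf⟩ := hUC ε' hε'0
    obtain ⟨δ₁, hδ₁0, hδ₁⟩ := Metric.continuousWithinAt_iff.1 (hh₁_cont p₀ hp₀) ε₁ hε₁0
    obtain ⟨δ₂, hδ₂0, hδ₂⟩ := Metric.continuousWithinAt_iff.1 (hh₂_cont p₀ hp₀) ε₁ hε₁0
    refine ⟨min (min δ₁ δ₂) (min δf 1), by positivity, ?_⟩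
    intro p hp hdist
    have hΔ₁ : |h₁ p - h₁ p₀| < ε₁ := by
      have := hδ₁ hp (lt_of_lt_of_le hdist ((min_le_left _ _).trans (min_le_left _ _)))
      rwa [Real.dist_eq] at this
    have hΔ₂ : |h₂ p - h₂ p₀| < ε₁ := by
      have := hδ₂ hp (lt_of_lt_of_le hdist ((min_le_left _ _).trans (min_le_right _ _)))
      rwa [Real.dist_eq] at this
    have hdf : dist p p₀ < δf := lt_of_lt_of_le hdist ((min_le_right _ _).trans (min_le_left _ _))
    have hd1 : dist p p₀ ≤ 1 :=
      le_of_lt (lt_of_lt_of_le hdist ((min_le_right _ _).trans (min_le_right _ _)))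
    have hpR : ‖p‖ ≤ R := by
      have := norm_le_norm_add_norm_sub' p p₀
      rw [hRdef]
      have h2 : ‖p₀ - p‖ = dist p₀ p := (dist_eq_norm _ _).symm
      have h3 : dist p₀ p = dist p p₀ := dist_comm _ _
      calc ‖p‖ ≤ ‖p₀‖ + ‖p₀ - p‖ := by
            have := norm_sub_norm_le p₀ p  -- not quite; use triangle
            have h4 : p = p₀ - (p₀ - p) := by ring
            calc ‖p‖ = ‖p₀ - (p₀ - p)‖ := by rw [← h4]
              _ ≤ ‖p₀‖ + ‖p₀ - p‖ := norm_sub_le _ _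
        _ ≤ ‖p₀‖ + 1 := by rw [h2, h3]; linarith
    have hp₀R : ‖p₀‖ ≤ R := by rw [hRdef]; linarith
    -- uniform closeness of the nonlinearities
    have hFd : ∀ s ∈ I01, |F p s - F p₀ s| ≤ ε' := by
      intro s hs
      have hx := hmembox R p hp hpR s hs
      have hy := hmembox R p₀ hp₀ hp₀R s hs
      have hdd : dist ((s, ext01 p.1 s, ext01 p.2 s) : ℝ × ℝ × ℝ)
          (s, ext01 p₀.1 s, ext01 p₀.2 s) < δf := by
        rw [Prod.dist_eq, Prod.dist_eq, dist_self]
        have e1 : dist (ext01 p.1 s) (ext01 p₀.1 s) ≤ dist p p₀ :=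
          (ContinuousMap.dist_apply_le_dist _).trans
            (by rw [Prod.dist_eq]; exact le_max_left _ _)
        have e2 : dist (ext01 p.2 s) (ext01 p₀.2 s) ≤ dist p p₀ :=
          (ContinuousMap.dist_apply_le_dist _).trans
            (by rw [Prod.dist_eq]; exact le_max_right _ _)
        exact max_lt hδf0 (max_lt (lt_of_le_of_lt e1 hdf) (lt_of_le_of_lt e2 hdf))
      have := hδf _ hx _ hy hdd
      rw [Real.dist_eq] at this
      exact this.le
    -- the kernel integrals are close
    have hKd : ∀ t : I01, |(∫ s, k ↑t s * F p s ∂μ01) - ∫ s, k ↑t s * F p₀ s ∂μ01| ≤ CΦ * ε' := by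
      intro t
      rw [← integral_sub (hkF_int p hp ↑t t.2) (hkF_int p₀ hp₀ ↑t t.2)]
      have he : (fun s => k ↑t s * F p s - k ↑t s * F p₀ s)
          = fun s => k ↑t s * (F p s - F p₀ s) := by funext s; ring
      rw [he]
      exact ker_bound k Φ (fun s => F p s - F p₀ s) ε' hε'0.le ↑t t.2 hkΦ'
        (by filter_upwards [mem_I01_ae] with s hs; exact hFd s hs) hΦμ
    have hQd : ∀ t : I01, |(∫ s, kt ↑t s * F p s ∂μ01) - ∫ s, kt ↑t s * F p₀ s ∂μ01| ≤ CΨ * ε' := by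
      intro t
      rw [← integral_sub (hktF_int p hp ↑t t.2) (hktF_int p₀ hp₀ ↑t t.2)]
      have he : (fun s => kt ↑t s * F p s - kt ↑t s * F p₀ s)
          = fun s => kt ↑t s * (F p s - F p₀ s) := by funext s; ring
      rw [he]
      exact ker_bound kt Ψ (fun s => F p s - F p₀ s) ε' hε'0.le ↑t t.2 hktΨ'
        (by filter_upwards [mem_I01_ae] with s hs; exact hFd s hs) hΨμ
    -- assemble
    have harith : η₁ * Gγ * ε₁ + η₂ * Gγ * ε₁ + lam * (CΨ * ε') ≤ ε / 2 + ε / 4 ∧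
        η₁ * Gγ * ε₁ + η₂ * Gγ * ε₁ + lam * (CΦ * ε') ≤ ε / 2 + ε / 4 := by
      have e1 : (η₁ * Gγ + η₂ * Gγ + 1) * ε₁ = ε / 2 := by
        rw [hε₁def]; field_simp
      have e2 : (lam * (CΦ + CΨ) + 1) * ε' = ε / 4 := by
        rw [hε'def]; field_simp
      constructor <;>
        nlinarith [hε₁0.le, hε'0.le, mul_nonneg (mul_nonneg hlam hCΦ0) hε'0.le,
          mul_nonneg (mul_nonneg hlam hCΨ0) hε'0.le]
    simp only [dif_pos hp, dif_pos hp₀]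
    rw [Prod.dist_eq]
    have hbig : ε / 2 + ε / 4 < ε := by linarith
    apply max_lt
    · apply lt_of_le_of_lt _ hbig
      rw [ContinuousMap.dist_le (by linarith)]
      intro t
      simp only [ContinuousMap.coe_mk, Set.restrict_apply, Real.dist_eq]
      refine le_trans ?_ harith.2
      have h3 : η₁ * γ₁ ↑t * h₁ p + η₂ * γ₂ ↑t * h₂ p + lam * ∫ s, k ↑t s * F p s ∂μ01
          - (η₁ * γ₁ ↑t * h₁ p₀ + η₂ * γ₂ ↑t * h₂ p₀ + lam * ∫ s, k ↑t s * F p₀ s ∂μ01)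
          = η₁ * γ₁ ↑t * (h₁ p - h₁ p₀) + η₂ * γ₂ ↑t * (h₂ p - h₂ p₀)
            + lam * ((∫ s, k ↑t s * F p s ∂μ01) - ∫ s, k ↑t s * F p₀ s ∂μ01) := by ring
      rw [h3]
      refine (abs_add_le _ _).trans (add_le_add ((abs_add_le _ _).trans (add_le_add ?_ ?_)) ?_)
      · rw [abs_mul, abs_mul, abs_of_nonneg hη₁]
        exact mul_le_mul (mul_le_mul le_rfl (hGγ ↑t t.2).1 (abs_nonneg _) hη₁) hΔ₁.le
          (abs_nonneg _) (by positivity)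
      · rw [abs_mul, abs_mul, abs_of_nonneg hη₂]
        exact mul_le_mul (mul_le_mul le_rfl (hGγ ↑t t.2).2.1 (abs_nonneg _) hη₂) hΔ₂.le
          (abs_nonneg _) (by positivity)
      · rw [abs_mul, abs_of_nonneg hlam]
        exact mul_le_mul_of_nonneg_left (hKd t) hlam
    · apply lt_of_le_of_lt _ hbig
      rw [ContinuousMap.dist_le (by linarith)]
      intro t
      simp only [ContinuousMap.coe_mk, Set.restrict_apply, Real.dist_eq]
      refine le_trans ?_ harith.1
      have h3 : η₁ * γ₁' ↑t * h₁ p + η₂ * γ₂' ↑t * h₂ p + lam * ∫ s, kt ↑t s * F p s ∂μ01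
          - (η₁ * γ₁' ↑t * h₁ p₀ + η₂ * γ₂' ↑t * h₂ p₀ + lam * ∫ s, kt ↑t s * F p₀ s ∂μ01)
          = η₁ * γ₁' ↑t * (h₁ p - h₁ p₀) + η₂ * γ₂' ↑t * (h₂ p - h₂ p₀)
            + lam * ((∫ s, kt ↑t s * F p s ∂μ01) - ∫ s, kt ↑t s * F p₀ s ∂μ01) := by ring
      rw [h3]
      refine (abs_add_le _ _).trans (add_le_add ((abs_add_le _ _).trans (add_le_add ?_ ?_)) ?_)
      · rw [abs_mul, abs_mul, abs_of_nonneg hη₁]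
        exact mul_le_mul (mul_le_mul le_rfl (hGγ ↑t t.2).2.2.1 (abs_nonneg _) hη₁) hΔ₁.le
          (abs_nonneg _) (by positivity)
      · rw [abs_mul, abs_mul, abs_of_nonneg hη₂]
        exact mul_le_mul (mul_le_mul le_rfl (hGγ ↑t t.2).2.2.2 (abs_nonneg _) hη₂) hΔ₂.le
          (abs_nonneg _) (by positivity)
      · rw [abs_mul, abs_of_nonneg hlam]
        exact mul_le_mul_of_nonneg_left (hQd t) hlam
  -- (4) compactness
  · intro B hB hBbd
    obtain ⟨R₀, hR₀⟩ := isBounded_iff_forall_norm_le.1 hBbd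
    set R : ℝ := max R₀ 0 with hRdef
    have hRB : ∀ p ∈ B, ‖p‖ ≤ R := fun p hp => (hR₀ p hp).trans (le_max_left _ _)
    -- a uniform bound for F on B
    obtain ⟨M, hM0, hM⟩ : ∃ M, 0 ≤ M ∧ ∀ p ∈ B, ∀ s ∈ I01, |F p s| ≤ M := by
      obtain ⟨M, hM⟩ := ((isCompact_Icc.prod (isCompact_Icc.prod isCompact_Icc)) :
          IsCompact (I01 ×ˢ Icc (0:ℝ) R ×ˢ Icc (0:ℝ) R)).exists_bound_of_continuousOn
        (hf_cont.mono (fun x hx => ⟨hx.1, hx.2.1.1, hx.2.2.1⟩))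
      refine ⟨max M 0, le_max_right _ _, fun p hp s hs => ?_⟩
      have hb := hM _ (hmembox R p (hB hp) (hRB p hp) s hs)
      rw [Real.norm_eq_abs] at hb
      exact le_trans hb (le_max_left _ _)
    -- uniform bounds for h₁, h₂ on B
    obtain ⟨H₁, hH₁⟩ := isBounded_iff_forall_norm_le.1 (hh₁_bdd B hB hBbd)
    obtain ⟨H₂, hH₂⟩ := isBounded_iff_forall_norm_le.1 (hh₂_bdd B hB hBbd)
    set H : ℝ := max (max H₁ H₂) 0 with hHdef
    have hH0 : 0 ≤ H := le_max_right _ _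
    have hH₁' : ∀ p ∈ B, |h₁ p| ≤ H := fun p hp =>
      (hH₁ (h₁ p) ⟨p, hp, rfl⟩).trans ((le_max_left _ _).trans (le_max_left _ _))
    have hH₂' : ∀ p ∈ B, |h₂ p| ≤ H := fun p hp =>
      (hH₂ (h₂ p) ⟨p, hp, rfl⟩).trans ((le_max_right _ _).trans (le_max_left _ _))
    -- bound for members of B, ae form
    have hMae : ∀ p ∈ B, ∀ᵐ s ∂μ01, |F p s| ≤ M := by
      intro p hp
      filter_upwards [mem_I01_ae] with s hs
      exact hM p hp s hs
    -- the common bound for the image families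
    have hC0 : 0 ≤ η₁ * Gγ * H + η₂ * Gγ * H + lam * (CΦ * M) + lam * (CΨ * M) := by
      have := mul_nonneg (mul_nonneg hη₁ hGγ0) hH0
      have := mul_nonneg (mul_nonneg hη₂ hGγ0) hH0
      have := mul_nonneg hlam (mul_nonneg hCΦ0 hM0)
      have := mul_nonneg hlam (mul_nonneg hCΨ0 hM0)
      linarith
    -- generic equicontinuity + boundedness for each coordinate family
    have hcoord : ∀ (κ : ℝ → ℝ → ℝ) (Φκ g₁ g₂ g₁' g₂' : ℝ → ℝ),
        (∀ t ∈ I01, AEStronglyMeasurable (fun s => κ t s) μ01) →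
        (∀ᵐ s ∂μ01, ContinuousOn (fun t => κ t s) I01) →
        (∀ᵐ s ∂μ01, ∀ t ∈ I01, |κ t s| ≤ Φκ s) →
        Integrable Φκ μ01 →
        ContinuousOn g₁ I01 → ContinuousOn g₂ I01 →
        (∀ t ∈ I01, |g₁ t| ≤ Gγ) → (∀ t ∈ I01, |g₂ t| ≤ Gγ) →
        IsCompact (closure {g : C(I01, ℝ) | ∃ p ∈ B, ∀ t : I01,
          g t = η₁ * g₁ ↑t * h₁ p + η₂ * g₂ ↑t * h₂ p + lam * ∫ s, κ ↑t s * F p s ∂μ01}) := by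
      intro κ Φκ g₁ g₂ g₁' g₂' hκm hκc hκbd hΦκ hg₁c hg₂c hg₁b hg₂b
      set Iκ : ℝ := ∫ s, Φκ s ∂μ01 with hIκdef
      have hIκ0 : 0 ≤ Iκ := by
        apply integral_nonneg_of_ae
        filter_upwards [hκbd] with s hs
        exact (abs_nonneg _).trans (hs 0 h0I)
      apply aa_compact_closure _ (η₁ * Gγ * H + η₂ * Gγ * H + lam * (Iκ * M))
      · rintro g ⟨p, hpB, hgt⟩ t
        rw [hgt t]
        have hpc := hB hpB
        refine (abs_add_le _ _).trans (add_le_add ((abs_add_le _ _).trans (add_le_add ?_ ?_)) ?_)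
        · rw [abs_mul, abs_mul, abs_of_nonneg hη₁]
          exact mul_le_mul (mul_le_mul le_rfl (hg₁b ↑t t.2) (abs_nonneg _) hη₁)
            (hH₁' p hpB) (abs_nonneg _) (by positivity)
        · rw [abs_mul, abs_mul, abs_of_nonneg hη₂]
          exact mul_le_mul (mul_le_mul le_rfl (hg₂b ↑t t.2) (abs_nonneg _) hη₂)
            (hH₂' p hpB) (abs_nonneg _) (by positivity)
        · rw [abs_mul, abs_of_nonneg hlam]
          exact mul_le_mul_of_nonneg_left
            (ker_bound κ Φκ (F p) M hM0 ↑t t.2 hκbd (hMae p hpB) hΦκ) hlam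
      · intro x₀
        rw [Metric.equicontinuousAt_iff_right]
        intro ε hε
        -- the modulus of equicontinuity
        have hWtend : Tendsto (fun t : I01 =>
            η₁ * H * |g₁ ↑t - g₁ ↑x₀| + η₂ * H * |g₂ ↑t - g₂ ↑x₀|
              + lam * M * ∫ s, |κ ↑t s - κ ↑x₀ s| ∂μ01) (𝓝 x₀) (𝓝 0) := by
          have hval : Tendsto (fun t : I01 => (t : ℝ)) (𝓝 x₀) (𝓝[I01] ↑x₀) :=
            tendsto_nhdsWithin_of_tendsto_nhds_of_eventually_within _
              continuous_subtype_val.continuousAt (Eventually.of_forall fun t => t.2)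
          have h1 : Tendsto (fun t : ℝ => |g₁ t - g₁ ↑x₀|) (𝓝[I01] ↑x₀) (𝓝 0) := by
            have h0 : ContinuousWithinAt (fun t => |g₁ t - g₁ ↑x₀|) I01 ↑x₀ :=
              ((hg₁c ↑x₀ x₀.2).sub
                (continuousWithinAt_const : ContinuousWithinAt (fun _ => g₁ ↑x₀) I01 ↑x₀)).abs
            rw [ContinuousWithinAt] at h0
            simpa using h0
          have h2 : Tendsto (fun t : ℝ => |g₂ t - g₂ ↑x₀|) (𝓝[I01] ↑x₀) (𝓝 0) := by
            have h0 : ContinuousWithinAt (fun t => |g₂ t - g₂ ↑x₀|) I01 ↑x₀ :=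
              ((hg₂c ↑x₀ x₀.2).sub
                (continuousWithinAt_const : ContinuousWithinAt (fun _ => g₂ ↑x₀) I01 ↑x₀)).abs
            rw [ContinuousWithinAt] at h0
            simpa using h0
          have h3 := ker_tendsto_abs κ Φκ ↑x₀ x₀.2 hκm hκc hκbd hΦκ
          have h4 : Tendsto (fun t : ℝ =>
              η₁ * H * |g₁ t - g₁ ↑x₀| + η₂ * H * |g₂ t - g₂ ↑x₀|
                + lam * M * ∫ s, |κ t s - κ ↑x₀ s| ∂μ01) (𝓝[I01] ↑x₀) (𝓝 0) := by
            have := ((h1.const_mul (η₁ * H)).add (h2.const_mul (η₂ * H))).add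
              (h3.const_mul (lam * M))
            simpa using this
          exact h4.comp hval
        filter_upwards [hWtend.eventually_lt_const hε] with t hWt
        rintro ⟨g, p, hpB, hgt⟩
        have hpc := hB hpB
        rw [Real.dist_eq, hgt x₀, hgt t]
        refine lt_of_le_of_lt ?_ hWt
        have h3 : η₁ * g₁ ↑x₀ * h₁ p + η₂ * g₂ ↑x₀ * h₂ p + lam * ∫ s, κ ↑x₀ s * F p s ∂μ01
            - (η₁ * g₁ ↑t * h₁ p + η₂ * g₂ ↑t * h₂ p + lam * ∫ s, κ ↑t s * F p s ∂μ01)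
            = η₁ * (g₁ ↑x₀ - g₁ ↑t) * h₁ p + η₂ * (g₂ ↑x₀ - g₂ ↑t) * h₂ p
              + lam * ((∫ s, κ ↑x₀ s * F p s ∂μ01) - ∫ s, κ ↑t s * F p s ∂μ01) := by ring
        rw [h3]
        refine (abs_add_le _ _).trans (add_le_add ((abs_add_le _ _).trans (add_le_add ?_ ?_)) ?_)
        · rw [abs_mul, abs_mul, abs_of_nonneg hη₁, abs_sub_comm]
          calc η₁ * |g₁ ↑t - g₁ ↑x₀| * |h₁ p| ≤ η₁ * |g₁ ↑t - g₁ ↑x₀| * H :=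
                mul_le_mul_of_nonneg_left (hH₁' p hpB) (by positivity)
            _ = η₁ * H * |g₁ ↑t - g₁ ↑x₀| := by ring
        · rw [abs_mul, abs_mul, abs_of_nonneg hη₂, abs_sub_comm]
          calc η₂ * |g₂ ↑t - g₂ ↑x₀| * |h₂ p| ≤ η₂ * |g₂ ↑t - g₂ ↑x₀| * H :=
                mul_le_mul_of_nonneg_left (hH₂' p hpB) (by positivity)
            _ = η₂ * H * |g₂ ↑t - g₂ ↑x₀| := by ring
        · rw [abs_mul, abs_of_nonneg hlam]
          have h5 := ker_diff_bound κ Φκ (F p) M ↑x₀ ↑t x₀.2 t.2 (hκm ↑x₀ x₀.2) (hκm ↑t t.2)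
            (hF_meas p hpc) hκbd (hMae p hpB) hΦκ
          have h6 : (∫ s, |κ ↑x₀ s - κ ↑t s| ∂μ01) = ∫ s, |κ ↑t s - κ ↑x₀ s| ∂μ01 := by
            congr 1; funext s; rw [abs_sub_comm]
          rw [h6] at h5
          calc lam * |(∫ s, κ ↑x₀ s * F p s ∂μ01) - ∫ s, κ ↑t s * F p s ∂μ01|
              ≤ lam * ((∫ s, |κ ↑t s - κ ↑x₀ s| ∂μ01) * M) :=
                mul_le_mul_of_nonneg_left h5 hlam
            _ = lam * M * ∫ s, |κ ↑t s - κ ↑x₀ s| ∂μ01 := by ring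
    -- apply to the two coordinates
    have hc1 := hcoord k Φ γ₁ γ₂ γ₁' γ₂' (fun t _ => (hkmeas t).aestronglyMeasurable)
      hk_cont' hkΦ' hΦμ hγ₁c hγ₂c (fun t ht => (hGγ t ht).1) (fun t ht => (hGγ t ht).2.1)
    have hc2 := hcoord kt Ψ γ₁' γ₂' γ₁ γ₂ hktmeas hktc' hktΨ' hΨμ
      hγ₁'c hγ₂'c (fun t ht => (hGγ t ht).2.2.1) (fun t ht => (hGγ t ht).2.2.2)
    apply IsCompact.of_isClosed_subset (hc1.prod hc2) isClosed_closure
    rw [← closure_prod_eq]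
    apply closure_mono
    rintro x ⟨p, hpB, rfl⟩
    have hpc := hB hpB
    constructor
    · exact ⟨p, hpB, fun t => by simp only [dif_pos hpc, ContinuousMap.coe_mk,
        Set.restrict_apply]⟩
    · exact ⟨p, hpB, fun t => by simp only [dif_pos hpc, ContinuousMap.coe_mk,
        Set.restrict_apply]⟩
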